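/- Let n = r·s with r, s > 1. Identify Fin n with Fin s × Fin r and embed U = S_r into S_n by letting a permutation of Fin r act simultaneously on the second coordinate of each of the s blocks. Then the restriction of the ℤ[S_n]-module M_n to U decomposes as a ℤ[S_r]-module into a direct sum M_n|_U ≅ M_r ⊕ (Fin r → ℤ)^{⊕(s−1)}, i.e. a copy of M_r plus (s−1) copies of the natural permutation module of S_r on Fin r. -/

import Mathlib

/-! Preliminaries: a lightweight theory of `G`-modules (abelian groups with a
distributive `G`-action, i.e. `ℤ[G]`-modules), lattices, permutation modules,
flasque modules and flasque resolutions, the norm-one-torus character lattice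
`Mn n` over the symmetric group `S_n`, and low-degree group cohomology with
the invariant `Ш²_ω`. -/

open Equiv

universe u

/-- A `G`-module: an additive commutative group with a distributive `G`-action
(equivalently, a `ℤ[G]`-module). -/
structure GMod (G : Type u) [Group G] : Type (u + 1) where
  carrier : Type u
  [isAddCommGroup : AddCommGroup carrier]
  [isDistribMulAction : DistribMulAction G carrier]

attribute [instance] GMod.isAddCommGroup GMod.isDistribMulAction

namespace GMod

variable {G : Type u} [Group G]

instance : CoeSort (GMod G) (Type u) := ⟨GMod.carrier⟩

/-- A morphism of `G`-modules is an additive map commuting with the `G`-action. -/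
def IsEquivariant {M N : GMod G} (f : M →+ N) : Prop :=
  ∀ (g : G) (m : M), f (g • m) = g • f m

/-- Two `G`-modules are isomorphic if there is an equivariant additive equivalence. -/
def Iso (M N : GMod G) : Prop :=
  ∃ e : M ≃+ N, ∀ (g : G) (m : M), e (g • m) = g • e m

/-- Restriction of a `G`-module along a group homomorphism `φ : H →* G`. -/
def res (M : GMod G) {H : Type u} [Group H] (φ : H →* G) : GMod H where
  carrier := M
  isDistribMulAction :=
    { smul := fun h m => φ h • m
      one_smul := fun m => by show φ 1 • m = m; simp
      mul_smul := fun a b m => by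
        show φ (a * b) • m = φ a • (φ b • m)
        rw [map_mul, mul_smul]
      smul_zero := fun a => by show φ a • (0 : M.carrier) = 0; simp
      smul_add := fun a x y => by
        show φ a • (x + y) = φ a • x + φ a • y
        simp [smul_add] }

/-- The direct sum of two `G`-modules. -/
def prod (M N : GMod G) : GMod G where
  carrier := M × N

/-- The direct sum of `k` copies of a `G`-module. -/
def copies (k : ℕ) (M : GMod G) : GMod G where
  carrier := Fin k → M

/-- A trivial `G`-module. -/
def triv (G : Type u) [Group G] (A : Type u) [AddCommGroup A] : GMod G where
  carrier := A
  isDistribMulAction :=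
    { smul := fun _ a => a
      one_smul := fun _ => rfl
      mul_smul := fun _ _ _ => rfl
      smul_zero := fun _ => rfl
      smul_add := fun _ _ _ => rfl }

/-- The permutation `G`-module `ℤ[X]` attached to an action `φ : G →* Perm X`,
realized as functions `X → ℤ` with `(g • f) x = f ((φ g)⁻¹ x)`. -/
def permMod {X : Type u} (φ : G →* Equiv.Perm X) : GMod G where
  carrier := X → ℤ
  isDistribMulAction :=
    { smul := fun g f => fun x => f ((φ g)⁻¹ x)
      one_smul := fun f => by funext x; show f ((φ 1)⁻¹ x) = f x; simp
      mul_smul := fun g h f => by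
        funext x
        show f ((φ (g * h))⁻¹ x) = f ((φ h)⁻¹ ((φ g)⁻¹ x))
        rw [map_mul, mul_inv_rev, Equiv.Perm.mul_apply]
      smul_zero := fun g => rfl
      smul_add := fun g a b => rfl }

/-- The subgroup of `X → ℤ` generated by the all-ones vector (for `X = G` this
is `ℤ · N_G`, the span of the norm element of the group algebra). -/
def normSub (X : Type u) : AddSubgroup (X → ℤ) :=
  AddSubgroup.zmultiples (fun _ => (1 : ℤ))

/-- The additive endomorphism of `X → ℤ` induced by a permutation of `X`. -/
def permHomAdd {X : Type u} (σ : Equiv.Perm X) : (X → ℤ) →+ (X → ℤ) where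
  toFun f := fun x => f (σ⁻¹ x)
  map_zero' := rfl
  map_add' _ _ := rfl

theorem normSub_le_comap {X : Type u} (σ : Equiv.Perm X) :
    normSub X ≤ (normSub X).comap (permHomAdd σ) := by
  intro f hf
  rcases AddSubgroup.mem_zmultiples_iff.mp hf with ⟨k, rfl⟩
  exact AddSubgroup.mem_zmultiples_iff.mpr ⟨k, by funext x; simp [permHomAdd]⟩

/-- The quotient of the permutation module `ℤ[X]` by the span of the all-ones
vector, as a `G`-module.  For `X = Fin n` with the tautological action of
`S_n` this is the lattice `M_n`; for `X = G` with the regular action this is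
`ℤ[G]/ℤ·N_G`. -/
def permModQuot {X : Type u} (φ : G →* Equiv.Perm X) : GMod G where
  carrier := (X → ℤ) ⧸ normSub X
  isDistribMulAction :=
    { smul := fun g q =>
        QuotientAddGroup.map _ _ (permHomAdd (φ g)) (normSub_le_comap (φ g)) q
      one_smul := fun q => QuotientAddGroup.induction_on q (fun f => by
        show QuotientAddGroup.map _ _ (permHomAdd (φ 1)) _ (QuotientAddGroup.mk f)
            = QuotientAddGroup.mk f
        rw [QuotientAddGroup.map_mk]
        congr 1
        funext x
        simp [permHomAdd])
      mul_smul := fun g h q => QuotientAddGroup.induction_on q (fun f => by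
        show QuotientAddGroup.map _ _ (permHomAdd (φ (g * h))) _ (QuotientAddGroup.mk f)
            = QuotientAddGroup.map _ _ (permHomAdd (φ g)) _
              (QuotientAddGroup.map _ _ (permHomAdd (φ h)) _ (QuotientAddGroup.mk f))
        rw [QuotientAddGroup.map_mk, QuotientAddGroup.map_mk, QuotientAddGroup.map_mk]
        congr 1
        funext x
        simp [permHomAdd, map_mul, mul_inv_rev, Equiv.Perm.mul_apply])
      smul_zero := fun g => map_zero _
      smul_add := fun g a b => map_add _ a b }

/-- The character lattice `M_n = ℤ[S_n/S_{n-1}] / ℤ·(1,…,1)` of the norm-one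
torus of a degree-`n` generic extension: the quotient of `Fin n → ℤ` (with the
coordinate-permuting action of `S_n`) by the span of the all-ones vector. -/
def Mn (n : ℕ) : GMod (Equiv.Perm (Fin n)) :=
  permModQuot (MonoidHom.id (Equiv.Perm (Fin n)))

/-- The natural permutation module `Fin n → ℤ` of `S_n`. -/
def stdMod (n : ℕ) : GMod (Equiv.Perm (Fin n)) :=
  permMod (MonoidHom.id (Equiv.Perm (Fin n)))

/-- The regular `G`-module `ℤ[G]`, realized as functions `G → ℤ`. -/
def regular (G : Type u) [Group G] : GMod G :=
  permMod (MulAction.toPermHom G G)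

/-- The quotient `ℤ[G]/ℤ·N_G` of the regular module by the span of the norm
element `N_G = Σ_{g ∈ G} g`. -/
def regModNorm (G : Type u) [Group G] : GMod G :=
  permModQuot (MulAction.toPermHom G G)

/-- A `G`-lattice: a `G`-module that is finitely generated and free over `ℤ`. -/
def IsLattice (M : GMod G) : Prop :=
  Module.Free ℤ M ∧ Module.Finite ℤ M

/-- A permutation `G`-lattice: one admitting a finite `ℤ`-basis permuted by `G`. -/
def IsPermutation (M : GMod G) : Prop :=
  ∃ (ι : Type u) (_ : Finite ι) (b : Module.Basis ι ℤ M) (f : G →* Equiv.Perm ι),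
    ∀ (g : G) (i : ι), g • b i = b (f g i)

/-- A stably permutation `G`-module: `N ⊕ P ≅ Q` for permutation modules `P, Q`. -/
def IsStablyPermutation (N : GMod G) : Prop :=
  ∃ P Q : GMod G, P.IsPermutation ∧ Q.IsPermutation ∧ Iso (N.prod P) Q

/-- A flasque `G`-module: `Ĥ⁻¹(G', N) = 0` for every subgroup `G' ≤ G`, i.e.
every `x` killed by the norm of `G'` is a sum of elements `g • y - y`. -/
def IsFlasque [Finite G] (N : GMod G) : Prop :=
  ∀ (H : Subgroup G) (x : N),
    (∑ g ∈ (Set.toFinite (H : Set G)).toFinset, g • x) = 0 →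
      x ∈ AddSubgroup.closure {z : N.carrier | ∃ g ∈ H, ∃ y : N.carrier, z = g • y - y}

/-- A flasque resolution `0 → M → S → N → 0`: a short exact sequence of
`G`-lattices with `S` a permutation module and `N` flasque. -/
def IsFlasqueResolution [Finite G] (M S N : GMod G) : Prop :=
  M.IsLattice ∧ S.IsLattice ∧ N.IsLattice ∧ S.IsPermutation ∧ N.IsFlasque ∧
    ∃ (i : M →+ S) (p : S →+ N),
      IsEquivariant i ∧ IsEquivariant p ∧
        Function.Injective i ∧ Function.Surjective p ∧ i.range = p.ker

/-! ### Low-degree group cohomology via inhomogeneous cocycles. -/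

/-- Inhomogeneous 2-cocycles of `G` with values in `M`. -/
def twoCocycles (M : GMod G) : AddSubgroup (G → G → M.carrier) where
  carrier := {f | ∀ g h k : G, g • f h k + f g (h * k) = f (g * h) k + f g h}
  zero_mem' := by intro g h k; simp
  add_mem' := by
    intro a b ha hb g h k
    simp only [Pi.add_apply, smul_add]
    rw [add_add_add_comm, ha g h k, hb g h k, add_add_add_comm]
  neg_mem' := by
    intro a ha g h k
    simp only [Pi.neg_apply, smul_neg, ← neg_add, ha g h k]

/-- The differential sending a 1-cochain to a 2-coboundary. -/
def dOne (M : GMod G) : (G → M.carrier) →+ (G → G → M.carrier) where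
  toFun c := fun g h => g • c h - c (g * h) + c g
  map_zero' := by funext g h; simp
  map_add' a b := by
    funext g h
    simp only [Pi.add_apply, smul_add]
    abel

/-- `H²(G, M)`: 2-cocycles modulo 2-coboundaries. -/
def H2 (M : GMod G) : Type u :=
  twoCocycles M ⧸ ((dOne M).range.addSubgroupOf (twoCocycles M))

instance (M : GMod G) : AddCommGroup (H2 M) :=
  inferInstanceAs (AddCommGroup (_ ⧸ _))

/-- 1-cocycles (crossed homomorphisms) of `G` with values in `M`. -/
def oneCocycles (M : GMod G) : AddSubgroup (G → M.carrier) where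
  carrier := {f | ∀ g h : G, f (g * h) = g • f h + f g}
  zero_mem' := by intro g h; simp
  add_mem' := by
    intro a b ha hb g h
    simp only [Pi.add_apply, smul_add, ha g h, hb g h]
    abel
  neg_mem' := by
    intro a ha g h
    simp only [Pi.neg_apply, smul_neg, ha g h]
    abel

/-- The differential sending a 0-cochain to a 1-coboundary. -/
def dZero (M : GMod G) : M.carrier →+ (G → M.carrier) where
  toFun m := fun g => g • m - m
  map_zero' := by funext g; simp
  map_add' a b := by
    funext g
    simp only [Pi.add_apply, smul_add]
    abel

/-- `H¹(G, M)`: 1-cocycles modulo 1-coboundaries. -/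
def H1 (M : GMod G) : Type u :=
  oneCocycles M ⧸ ((dZero M).range.addSubgroupOf (oneCocycles M))

instance (M : GMod G) : AddCommGroup (H1 M) :=
  inferInstanceAs (AddCommGroup (_ ⧸ _))

/-- Restriction of 2-cocycles along a group homomorphism `φ : H →* G`. -/
def resTwoCocycles (M : GMod G) {H : Type u} [Group H] (φ : H →* G) :
    twoCocycles M →+ twoCocycles (M.res φ) where
  toFun f := ⟨fun a b => f.1 (φ a) (φ b), by
    intro a b c
    show φ a • f.1 (φ b) (φ c) + f.1 (φ a) (φ (b * c))
        = f.1 (φ (a * b)) (φ c) + f.1 (φ a) (φ b)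
    rw [map_mul, map_mul]
    exact f.2 (φ a) (φ b) (φ c)⟩
  map_zero' := rfl
  map_add' _ _ := rfl

theorem coboundaries_le_comap_resTwoCocycles (M : GMod G) {H : Type u} [Group H]
    (φ : H →* G) :
    ((dOne M).range.addSubgroupOf (twoCocycles M)) ≤
      (((dOne (M.res φ)).range.addSubgroupOf (twoCocycles (M.res φ))).comap
        (resTwoCocycles M φ)) := by
  intro f hf
  rcases hf with ⟨c, hc⟩
  refine ⟨fun h => c (φ h), ?_⟩
  have hc' : ∀ g h : G, g • c h - c (g * h) + c g = f.1 g h := fun g h =>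
    congrFun (congrFun hc g) h
  funext a b
  show φ a • c (φ b) - c (φ (a * b)) + c (φ a) = f.1 (φ a) (φ b)
  rw [map_mul]
  exact hc' (φ a) (φ b)

/-- The restriction map `H²(G, M) → H²(H, M)` along `φ : H →* G`. -/
def resH2 (M : GMod G) {H : Type u} [Group H] (φ : H →* G) :
    H2 M →+ H2 (M.res φ) :=
  QuotientAddGroup.map _ _ (resTwoCocycles M φ)
    (coboundaries_le_comap_resTwoCocycles M φ)

/-- `Ш²_ω(G, M)`: the subgroup of `H²(G, M)` of classes whose restriction to
every cyclic subgroup `⟨g⟩ ≤ G` vanishes. -/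
def Sha2omega (M : GMod G) : AddSubgroup (H2 M) :=
  ⨅ g : G, (resH2 M ((Subgroup.zpowers g).subtype)).ker

end GMod

open GMod

/-- The identification of `Fin s × Fin r` (s blocks of size r) with `Fin (r·s)`. -/
def blockEquiv (r s : ℕ) : Fin s × Fin r ≃ Fin (r * s) :=
  finProdFinEquiv.trans (finCongr (Nat.mul_comm s r))

/-- The embedding `S_r ↪ S_{r·s}` letting a permutation of `Fin r` act
simultaneously on the second coordinate of each of the `s` blocks. -/
def embedHom (r s : ℕ) : Equiv.Perm (Fin r) →* Equiv.Perm (Fin (r * s)) where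
  toFun π := (blockEquiv r s).permCongr ((Equiv.refl (Fin s)).prodCongr π)
  map_one' := by ext x; simp [Equiv.permCongr_apply]
  map_mul' a b := by
    ext x
    simp [Equiv.permCongr_apply, Equiv.Perm.mul_apply, Prod.map_map]

section Aux

variable (r s : ℕ)

theorem embedHom_apply_block (π : Equiv.Perm (Fin r)) (j : Fin s) (x : Fin r) :
    embedHom r s π (blockEquiv r s (j, x)) = blockEquiv r s (j, π x) := by
  simp [embedHom, Equiv.permCongr_apply]

theorem embedHom_inv_apply (π : Equiv.Perm (Fin r)) (j : Fin s) (x : Fin r) :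
    (embedHom r s π)⁻¹ (blockEquiv r s (j, x)) = blockEquiv r s (j, π⁻¹ x) := by
  have h := embedHom_apply_block r s π j (π⁻¹ x)
  rw [show π (π⁻¹ x) = x from π.apply_symm_apply x] at h
  rw [← h, show ∀ y, (embedHom r s π)⁻¹ ((embedHom r s π) y) = y from (embedHom r s π).symm_apply_apply]

variable [NeZero s]

/-- The forward additive map. -/
def decF : (Fin (r * s) → ℤ) →+
    ((Fin r → ℤ) ⧸ normSub (Fin r)) × (Fin (s - 1) → Fin r → ℤ) where
  toFun f :=
    (QuotientAddGroup.mk (fun x => f (blockEquiv r s (0, x))),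
     fun j x => f (blockEquiv r s (⟨j.val + 1, by omega⟩, x))
       - f (blockEquiv r s (0, x)))
  map_zero' := by
    refine Prod.ext ?_ ?_
    · show QuotientAddGroup.mk (fun _ => (0:ℤ)) = 0
      exact congrArg QuotientAddGroup.mk rfl
    · funext j x; simp
  map_add' f g := by
    refine Prod.ext ?_ ?_
    · show QuotientAddGroup.mk _ = QuotientAddGroup.mk _ + QuotientAddGroup.mk _
      rw [← QuotientAddGroup.mk_add]
      rfl
    · funext j x
      show _ - _ = _
      simp only [Pi.add_apply, Prod.snd_add]
      ring

theorem decF_norm (f : Fin (r * s) → ℤ) (hf : f ∈ normSub (Fin (r * s))) :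
    decF r s f = 0 := by
  rcases AddSubgroup.mem_zmultiples_iff.mp hf with ⟨k, rfl⟩
  refine Prod.ext ?_ ?_
  · show QuotientAddGroup.mk _ = 0
    rw [QuotientAddGroup.eq_zero_iff]
    exact AddSubgroup.mem_zmultiples_iff.mpr ⟨k, rfl⟩
  · funext j x
    show (k • (fun _ => (1:ℤ))) _ - (k • (fun _ => (1:ℤ))) _ = 0
    simp

/-- The descended map on the quotient. -/
def decQ : ((Fin (r * s) → ℤ) ⧸ normSub (Fin (r * s))) →+
    ((Fin r → ℤ) ⧸ normSub (Fin r)) × (Fin (s - 1) → Fin r → ℤ) :=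
  QuotientAddGroup.lift _ (decF r s) (decF_norm r s)

theorem decQ_mk (f : Fin (r * s) → ℤ) :
    decQ r s (QuotientAddGroup.mk f) = decF r s f := rfl

theorem decQ_injective : Function.Injective (decQ r s) := by
  rw [injective_iff_map_eq_zero]
  intro q hq
  induction q using QuotientAddGroup.induction_on with
  | H f =>
  rw [decQ_mk] at hq
  have h1 : (decF r s f).1 = 0 := by rw [hq]; rfl
  have h2 : (decF r s f).2 = 0 := by rw [hq]; rfl
  have h1' : (fun x => f (blockEquiv r s (0, x))) ∈ normSub (Fin r) :=
    (QuotientAddGroup.eq_zero_iff _).mp h1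
  rcases AddSubgroup.mem_zmultiples_iff.mp h1' with ⟨k, hk⟩
  have hk' : ∀ x, f (blockEquiv r s (0, x)) = k := fun x => by
    have := congrFun hk x
    simpa using this.symm
  have h2' : ∀ (j : Fin (s - 1)) (x : Fin r),
      f (blockEquiv r s (⟨j.val + 1, by omega⟩, x)) = k := by
    intro j x
    have h3 := congrFun (congrFun h2 j) x
    simp only [Pi.zero_apply] at h3
    have h4 := sub_eq_zero.mp h3
    rw [h4, hk' x]
  have hall : ∀ i, f i = k := by
    intro i
    obtain ⟨⟨j, x⟩, rfl⟩ := (blockEquiv r s).surjective i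
    rcases Nat.eq_zero_or_pos j.val with h0 | h0
    · have hj0 : j = 0 := Fin.ext h0
      rw [hj0]; exact hk' x
    · have hjs : j.val < s := j.isLt
      have hj : j.val - 1 < s - 1 := by omega
      have hje : j = ⟨(⟨j.val - 1, hj⟩ : Fin (s-1)).val + 1, by omega⟩ := by
        apply Fin.ext; simp; omega
      rw [hje]; exact h2' ⟨j.val - 1, hj⟩ x
  show QuotientAddGroup.mk f = 0
  rw [QuotientAddGroup.eq_zero_iff]
  exact AddSubgroup.mem_zmultiples_iff.mpr ⟨k, by funext i; simp [hall i]⟩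

theorem decQ_surjective : Function.Surjective (decQ r s) := by
  rintro ⟨q, h⟩
  induction q using QuotientAddGroup.induction_on with
  | H g =>
  set F : Fin (r * s) → ℤ := fun i =>
    (if hz : ((blockEquiv r s).symm i).1.val = 0 then 0
      else h ⟨((blockEquiv r s).symm i).1.val - 1, by
          have hlt := ((blockEquiv r s).symm i).1.isLt; omega⟩
        ((blockEquiv r s).symm i).2)
    + g (((blockEquiv r s).symm i).2) with hF
  refine ⟨QuotientAddGroup.mk F, ?_⟩
  rw [decQ_mk]
  refine Prod.ext ?_ ?_
  · show QuotientAddGroup.mk (fun x => F (blockEquiv r s (0, x))) = QuotientAddGroup.mk g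
    congr 1
    funext x
    simp [hF]
  · funext j x
    show F (blockEquiv r s (⟨j.val + 1, by omega⟩, x)) - F (blockEquiv r s (0, x)) = h j x
    have e0 : F (blockEquiv r s (0, x)) = g x := by simp [hF]
    have e1 : F (blockEquiv r s (⟨j.val + 1, by omega⟩, x)) = h j x + g x := by
      rw [hF]
      simp only [Equiv.symm_apply_apply]
      rw [dif_neg (by simp)]
      congr 1
    rw [e0, e1]
    ring

theorem decQ_equiv_aux (π : Equiv.Perm (Fin r)) (f : Fin (r * s) → ℤ) :
    decF r s (fun i => f ((embedHom r s π)⁻¹ i))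
      = (QuotientAddGroup.mk (fun x => f (blockEquiv r s (0, π⁻¹ x))),
         fun (j : Fin (s - 1)) (x : Fin r) =>
           f (blockEquiv r s (⟨j.val + 1, by omega⟩, π⁻¹ x))
             - f (blockEquiv r s (0, π⁻¹ x))) := by
  refine Prod.ext ?_ ?_
  · show QuotientAddGroup.mk (fun x => f ((embedHom r s π)⁻¹ (blockEquiv r s (0, x)))) = _
    congr 1
    funext x
    rw [embedHom_inv_apply]
  · funext j x
    show f ((embedHom r s π)⁻¹ (blockEquiv r s (⟨j.val + 1, by omega⟩, x)))
        - f ((embedHom r s π)⁻¹ (blockEquiv r s (0, x))) = _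
    rw [embedHom_inv_apply, embedHom_inv_apply]

end Aux

/-- Lemma 1 (decomposition): `M_{rs}` restricted to `U = S_r` is
`M_r ⊕ (Fin r → ℤ)^{⊕(s-1)}`. -/
theorem Mn_res_embedded_Sr (r s : ℕ) (hr : 1 < r) (hs : 1 < s) :
    GMod.Iso ((Mn (r * s)).res (embedHom r s))
      ((Mn r).prod (GMod.copies (s - 1) (stdMod r))) := by
  haveI : NeZero s := ⟨by omega⟩
  refine ⟨AddEquiv.ofBijective (decQ r s) ⟨decQ_injective r s, decQ_surjective r s⟩, ?_⟩
  intro π m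
  obtain ⟨f, rfl⟩ := QuotientAddGroup.mk_surjective m
  exact decQ_equiv_aux r s π f
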